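/- arXiv:math/0008201 — 2 statements merged into one kernel-verified Lean document; each statement's English description precedes it below -/
import Mathlib

section
/- Let γ be a contour in Λ(l) which is non-crossing. Then |γ \ ∂Q(Λ(l))| ≥ (1/2)|γ| + (1/2)|γ \ (∂Q(Λ(l)) ∪ γ̲)|, where γ̲ is the distinguished connected component of γ \ ∂Q(Λ(l)) separating Θ(γ) from the two untouched sides of the square. -/
open Finset

/-! ### Basic lattice notions for the 2-D Ising model on the square Λ(l) -/

abbrev Site := ℤ × ℤ

/-- `l¹`-distance on `ℤ²`. -/
def d1 (x y : Site) : ℤ := |x.1 - y.1| + |x.2 - y.2|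

/-- `l∞`-distance on `ℤ²`. -/
def dinf (x y : Site) : ℤ := max |x.1 - y.1| |x.2 - y.2|

/-- There is a path from `x` to `y` inside `S` with steps of `d`-distance 1. -/
def ChainIn (d : Site → Site → ℤ) (S : Set Site) (x y : Site) : Prop :=
  ∃ L : List Site, L.Chain' (fun a b => d a b = 1) ∧ L.head? = some x ∧
    L.getLast? = some y ∧ ∀ a ∈ L, a ∈ S

/-- `S` is connected with respect to steps of `d`-distance 1. -/
def ConnIn (d : Site → Site → ℤ) (S : Set Site) : Prop :=
  ∀ x ∈ S, ∀ y ∈ S, ChainIn d S x y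

def lamLo (l : ℕ) : ℤ := 1 - (((l + 1) / 2 : ℕ) : ℤ)
def lamHi (l : ℕ) : ℤ := ((l / 2 : ℕ) : ℤ)

/-- The lamBox the box. -/
noncomputable def lamBox (l : ℕ) : Finset Site := Finset.Icc (lamLo l, lamLo l) (lamHi l, lamHi l)

/-- The exterior boundary `∂_ex Λ(l)`. -/
def extBdry (l : ℕ) : Set Site := {y | y ∉ lamBox l ∧ ∃ x ∈ lamBox l, d1 x y = 1}

/-- An interval of `∂_ex Λ(l)` : an `l∞`-connected subset of it. -/
def IsBdryInterval (l : ℕ) (I : Finset Site) : Prop :=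
  (↑I : Set Site) ⊆ extBdry l ∧ ConnIn dinf ↑I

/-- The four nearest neighbours of a site. -/
def nbrs (x : Site) : Finset Site :=
  {(x.1 + 1, x.2), (x.1 - 1, x.2), (x.1, x.2 + 1), (x.1, x.2 - 1)}

/-- A dual bond, recorded by its two endpoints `v`, a dual vertex `v` standing for the
point `v + (1/2, 1/2)` of the dual lattice. -/
abbrev DBond := Sym2 Site

/-- The dual bond of the nearest-neighbour bond `{x, y}`. -/
def dualBond (x y : Site) : DBond :=
  if x.2 = y.2 then s((min x.1 y.1, x.2 - 1), (min x.1 y.1, x.2))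
  else s((x.1 - 1, min x.2 y.2), (x.1, min x.2 y.2))

/-- `∂Q(Θ)` : the set of dual bonds separating `Θ` from its complement. -/
def contourOf (Θ : Finset Site) : Finset DBond :=
  Θ.biUnion fun x => ((nbrs x).filter (· ∉ Θ)).image fun y => dualBond x y

/-- `Θ` and its complement are `l¹`-connected, so that `∂Q(Θ)` is a contour. -/
def IsContourRegion (Θ : Finset Site) : Prop :=
  ConnIn d1 ↑Θ ∧ ConnIn d1 ((↑Θ : Set Site)ᶜ)

/-- `∂Q(Λ(l))`, as a set of dual bonds. -/
noncomputable def boxBdry (l : ℕ) : Finset DBond := contourOf (lamBox l)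

/-- The dual vertex `v` lies on the side `F_l^j` of `Q(Λ(l))` (`j ∈ {1,-1,2,-2}` for
right, left, top, bottom). -/
def onSide (l : ℕ) (j : ℤ) (v : Site) : Prop :=
  (j = 1 ∧ v.1 = lamHi l ∧ lamLo l - 1 ≤ v.2 ∧ v.2 ≤ lamHi l) ∨
  (j = -1 ∧ v.1 = lamLo l - 1 ∧ lamLo l - 1 ≤ v.2 ∧ v.2 ≤ lamHi l) ∨
  (j = 2 ∧ v.2 = lamHi l ∧ lamLo l - 1 ≤ v.1 ∧ v.1 ≤ lamHi l) ∨
  (j = -2 ∧ v.2 = lamLo l - 1 ∧ lamLo l - 1 ≤ v.1 ∧ v.1 ≤ lamHi l)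

/-- The set of dual bonds `γ` meets the side `F_l^j`. -/
def touches (l : ℕ) (j : ℤ) (γ : Finset DBond) : Prop :=
  ∃ e ∈ γ, ∃ v : Site, v ∈ e ∧ onSide l j v

def HorizCrossing (l : ℕ) (γ : Finset DBond) : Prop := touches l 1 γ ∧ touches l (-1) γ
def VertCrossing (l : ℕ) (γ : Finset DBond) : Prop := touches l 2 γ ∧ touches l (-2) γ

/-- `γ` is neither horizontally nor vertically crossing. -/
def NonCrossing (l : ℕ) (γ : Finset DBond) : Prop :=
  ¬ (HorizCrossing l γ ∨ VertCrossing l γ)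

/-- Two dual bonds are adjacent if they share a dual vertex. -/
def DAdj (a b : DBond) : Prop := ∃ v : Site, v ∈ a ∧ v ∈ b

/-- A set of dual bonds is connected (via shared dual vertices). -/
def DConn (S : Finset DBond) : Prop :=
  ∀ e ∈ S, ∀ f ∈ S, ∃ L : List DBond, L.Chain' DAdj ∧ L.head? = some e ∧
    L.getLast? = some f ∧ ∀ a ∈ L, a ∈ S

/-- Dual bonds separating `Θt` from `Λ(l) \ Θt` inside the lamBox. -/
noncomputable def interiorBdry (l : ℕ) (Θt : Finset Site) : Finset DBond :=
  Θt.biUnion fun x => ((nbrs x).filter fun y => y ∈ lamBox l ∧ y ∉ Θt).image fun y => dualBond x y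

/-- The sites of `Λ(l)` along the side `F_l^j`. -/
def sideSites (l : ℕ) (j : ℤ) (x : Site) : Prop :=
  x ∈ lamBox l ∧ ((j = 1 ∧ x.1 = lamHi l) ∨ (j = -1 ∧ x.1 = lamLo l) ∨
    (j = 2 ∧ x.2 = lamHi l) ∨ (j = -2 ∧ x.2 = lamLo l))

/-- The data of the distinguished connected component `γ̲ = γu` of `γ \ ∂Q(Λ(l))` and of the
region `Θ̃ = Θt` into which a non-crossing contour `γ = ∂Q(Θ)` divides the lamBox: `γu` is a
connected component of `γ \ ∂Q(Λ(l))` dividing `Λ(l)` into the `l¹`-connected pieces `Θt` and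
`Λ(l) \ Θt`, with `Θ ⊆ Θt` and `F_l^i ∪ F_l^j ⊆ ∂Q(Λ(l) \ Θt)` for untouched sides `i, j`. -/
def UnderlineData (l : ℕ) (Θ : Finset Site) (γu : Finset DBond) (Θt : Finset Site) : Prop :=
  γu ⊆ contourOf Θ \ boxBdry l ∧ DConn γu ∧
  (∀ e ∈ contourOf Θ \ boxBdry l, e ∉ γu → ∀ f ∈ γu, ¬ DAdj e f) ∧
  Θ ⊆ Θt ∧ Θt ⊆ lamBox l ∧ ConnIn d1 ↑Θt ∧ ConnIn d1 ↑(lamBox l \ Θt) ∧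
  interiorBdry l Θt = γu ∧
  ∃ i j : ℤ, (i = 1 ∨ i = -1) ∧ (j = 2 ∨ j = -2) ∧
    ¬ touches l i (contourOf Θ) ∧ ¬ touches l j (contourOf Θ) ∧
    (∀ x, sideSites l i x → x ∉ Θt) ∧ (∀ x, sideSites l j x → x ∉ Θt)

/-- `γ̄ = ∂Q(Λ(l)) ∩ ∂Q(Θ̃)`. -/
noncomputable def gammaBar (l : ℕ) (Θt : Finset Site) : Finset DBond := boxBdry l ∩ contourOf Θt

/-- `V_ex(γ)` : sites of the exterior boundary attached to dual bonds of `γ`. -/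
noncomputable def Vex (l : ℕ) (γ : Finset DBond) : Finset Site :=
  (lamBox l).biUnion fun x => (nbrs x).filter fun y => y ∉ lamBox l ∧ dualBond x y ∈ γ

/-- `T_Θ` : flip the spins in `Θ`. -/
def flipC (Θ : Finset Site) (σ : Site → ℤ) : Site → ℤ :=
  fun x => if x ∈ Θ then -σ x else σ x

/-- The Ising Hamiltonian `H^ω_{Λ(l)}(σ)` with boundary condition `ω`. -/
noncomputable def Ham (l : ℕ) (ω : Site → ℝ) (σ : Site → ℤ) : ℝ :=
  -(1/2) * ∑ x ∈ lamBox l, ∑ y ∈ (nbrs x).filter (· ∈ lamBox l), ((σ x * σ y : ℤ) : ℝ)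
    - ∑ x ∈ lamBox l, ∑ y ∈ (nbrs x).filter (· ∉ lamBox l), (σ x : ℝ) * ω y

/-- `Δ_{γ₁,…,γ_p} H^ω_{Λ(l)}(σ) = H(σ) - H(T_{γ₁}∘⋯∘T_{γ_p} σ)`, the contours being
recorded by their regions `Θ(γ_j)`. -/
noncomputable def dH (l : ℕ) (ω : Site → ℝ) (Θs : List (Finset Site)) (σ : Site → ℤ) : ℝ :=
  Ham l ω σ - Ham l ω (Θs.foldr flipC σ)

/-- `C` is an (ε)-cluster in `Λ(l)` at `σ` : a maximal `l¹`-connected component of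
`{x ∈ Λ(l) : σ_x = ε}`. -/
def IsCluster (l : ℕ) (σ : Site → ℤ) (ε : ℤ) (C : Finset Site) : Prop :=
  C.Nonempty ∧ (∀ x ∈ C, x ∈ lamBox l ∧ σ x = ε) ∧ ConnIn d1 ↑C ∧
  ∀ y ∈ lamBox l, σ y = ε → (∃ x ∈ C, d1 x y = 1) → y ∈ C

/-- The `l¹`-connected component of `x` within `S`. -/
def l1Comp (S : Set Site) (x : Site) : Set Site := {y | ChainIn d1 S x y}

/-- `C` together with the bounded components of its complement; `∂Q(fill C)` is the outer
boundary of `Q(C)`. -/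
def fill (C : Finset Site) : Set Site :=
  ↑C ∪ {x | (l1Comp ((↑C : Set Site)ᶜ) x).Finite}

/-- `Θ` is the region `Θ(γ)` of an (ε)-contour `γ` in `Λ(l)` at `σ`. -/
def IsEContour (l : ℕ) (σ : Site → ℤ) (ε : ℤ) (Θ : Finset Site) : Prop :=
  ∃ C : Finset Site, IsCluster l σ ε C ∧ (↑Θ : Set Site) = fill C

/-- A dual bond is horizontal. -/
def isHorizD (e : DBond) : Prop := ∃ v w : Site, e = s(v, w) ∧ v.2 = w.2

/-- A dual bond is vertical. -/
def isVertD (e : DBond) : Prop := ∃ v w : Site, e = s(v, w) ∧ v.1 = w.1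

open Classical in
/-- The number of horizontal dual bonds in `γ`. -/
noncomputable def horizCount (γ : Finset DBond) : ℕ := (γ.filter isHorizD).card

open Classical in
/-- The number of vertical dual bonds in `γ`. -/
noncomputable def vertCount (γ : Finset DBond) : ℕ := (γ.filter isVertD).card

/-! ### Glauber dynamics -/

/-- Configurations on a finite `Λ ⊂ ℤ²` (`true` = spin `+1`, `false` = spin `-1`). -/
abbrev Cfg (Λ : Finset Site) := ↥Λ → Bool

/-- The spin value of a Boolean. -/
def spinVal (b : Bool) : ℝ := if b then 1 else -1

/-- The Ising Hamiltonian on a general finite `Λ`. -/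
noncomputable def HamG (Λ : Finset Site) (ω : Site → ℝ) (σ : Cfg Λ) : ℝ :=
  -(1/2) * ∑ x : ↥Λ, ∑ y : ↥Λ, (if d1 ↑x ↑y = 1 then spinVal (σ x) * spinVal (σ y) else 0)
    - ∑ x : ↥Λ, ∑ y ∈ (nbrs ↑x).filter (· ∉ Λ), spinVal (σ x) * ω y

/-- The finite-volume Gibbs measure `μ^ω_Λ` at inverse temperature `β`. -/
noncomputable def gibbs (Λ : Finset Site) (ω : Site → ℝ) (β : ℝ) (σ : Cfg Λ) : ℝ :=
  Real.exp (-β * HamG Λ ω σ) / ∑ τ : Cfg Λ, Real.exp (-β * HamG Λ ω τ)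

/-- The mean of `f` under the weights `μ`. -/
noncomputable def meanW (Λ : Finset Site) (μ f : Cfg Λ → ℝ) : ℝ := ∑ σ : Cfg Λ, μ σ * f σ

/-- `σ^x` : flip the spin at `x`. -/
def flipAt (Λ : Finset Site) (σ : Cfg Λ) (x : ↥Λ) : Cfg Λ := Function.update σ x (!(σ x))

/-- The generator `A^ω_Λ` of the stochastic Ising model with flip rates `q`. -/
noncomputable def genA (Λ : Finset Site) (q : ↥Λ → Cfg Λ → ℝ) (f : Cfg Λ → ℝ) (σ : Cfg Λ) : ℝ :=
  ∑ x : ↥Λ, q x σ * (f (flipAt Λ σ x) - f σ)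

/-- The variance `μ(|f - μf|²)`. -/
noncomputable def varW (Λ : Finset Site) (μ f : Cfg Λ → ℝ) : ℝ :=
  meanW Λ μ (fun σ => |f σ - meanW Λ μ f| ^ 2)

/-- The spectral gap `gap(Λ, ω, β)` : the infimum of the Rayleigh quotients
`-μ(f A f) / μ(|f - μf|²)`. -/
noncomputable def specGap (Λ : Finset Site) (ω : Site → ℝ) (β : ℝ)
    (q : ↥Λ → Cfg Λ → ℝ) : ℝ :=
  sInf { r | ∃ f : Cfg Λ → ℝ, varW Λ (gibbs Λ ω β) f ≠ 0 ∧
    r = (- meanW Λ (gibbs Λ ω β) fun σ => f σ * genA Λ q f σ) / varW Λ (gibbs Λ ω β) f }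

/-- The `±1`-spin function of a configuration on `Λ(l)` (`0` outside the lamBox). -/
noncomputable def toSpin (l : ℕ) (σ : Cfg (lamBox l)) : Site → ℤ :=
  fun x => if h : x ∈ lamBox l then (if σ ⟨x, h⟩ then 1 else -1) else 0

/-- The magnetization at the origin, `μ^ω_{Λ(l)}(σ₀)`. -/
noncomputable def magZero (l : ℕ) (ω : Site → ℝ) (β : ℝ) : ℝ :=
  ∑ σ : Cfg (lamBox l), gibbs (lamBox l) ω β σ * ((toSpin l σ (0, 0) : ℤ) : ℝ)

/-- The favoured sign `ε_{l,ω}`. -/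
noncomputable def epsSign (l : ℕ) (ω : Site → ℝ) (β : ℝ) : ℤ :=
  if 0 ≤ magZero l ω β then 1 else -1

/-- The trap event `Γ_l` : some (ε)-contour `γ` at `σ` meets `∂Q(Λ(l))` and has
`|γ| ≥ 2δ₁ l`. -/
def GammaEvent (l : ℕ) (δ₁ : ℝ) (ε : ℤ) : Set (Cfg (lamBox l)) :=
  {σ | ∃ Θ : Finset Site, IsEContour l (toSpin l σ) ε Θ ∧
    (contourOf Θ ∩ boxBdry l).Nonempty ∧ 2 * δ₁ * l ≤ ((contourOf Θ).card : ℝ)}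

open Classical in
/-- The Gibbs probability of an event `S ⊂ Ω_{Λ(l)}`. -/
noncomputable def probOf (l : ℕ) (ω : Site → ℝ) (β : ℝ) (S : Set (Cfg (lamBox l))) : ℝ :=
  ∑ σ ∈ Finset.univ.filter (· ∈ S), gibbs (lamBox l) ω β σ

/-- Union of the contours of a list of regions. -/
def unionB (L : List (Finset Site)) : Finset DBond :=
  L.foldr (fun Θ s => contourOf Θ ∪ s) ∅

/-- Union of a list of regions. -/
def unionR (L : List (Finset Site)) : Finset Site :=
  L.foldr (· ∪ ·) ∅


/-! ### Auxiliary lemmas for `stmt3` -/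

lemma mem_lamBox {l : ℕ} {x : Site} :
    x ∈ lamBox l ↔ lamLo l ≤ x.1 ∧ x.1 ≤ lamHi l ∧ lamLo l ≤ x.2 ∧ x.2 ≤ lamHi l := by
  simp [lamBox, Finset.mem_Icc, Prod.le_def]; tauto

lemma mem_lamBox' {l : ℕ} {a b : ℤ} :
    (a, b) ∈ lamBox l ↔ lamLo l ≤ a ∧ a ≤ lamHi l ∧ lamLo l ≤ b ∧ b ≤ lamHi l :=
  mem_lamBox

lemma mem_nbrs {x y : Site} :
    y ∈ nbrs x ↔ y = (x.1+1, x.2) ∨ y = (x.1-1,x.2) ∨ y = (x.1,x.2+1) ∨ y = (x.1,x.2-1) := by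
  simp [nbrs]

lemma mem_contourOf {Θ : Finset Site} {e : DBond} :
    e ∈ contourOf Θ ↔ ∃ x ∈ Θ, ∃ y ∈ nbrs x, y ∉ Θ ∧ dualBond x y = e := by
  simp [contourOf]; tauto

lemma dualBond_r (a b : ℤ) : dualBond (a,b) (a+1,b) = s((a, b-1),(a,b)) := by
  rw [dualBond, if_pos rfl, min_eq_left (by omega : a ≤ a + 1)]

lemma dualBond_l (a b : ℤ) : dualBond (a,b) (a-1,b) = s((a-1, b-1),(a-1,b)) := by
  rw [dualBond, if_pos rfl, min_eq_right (by omega : a - 1 ≤ a)]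

lemma dualBond_u (a b : ℤ) : dualBond (a,b) (a,b+1) = s((a-1, b),(a,b)) := by
  rw [dualBond, if_neg (by omega : ((a,b) : Site).2 ≠ ((a,b+1) : Site).2),
    min_eq_left (by omega : b ≤ b + 1)]

lemma dualBond_d (a b : ℤ) : dualBond (a,b) (a,b-1) = s((a-1, b-1),(a,b-1)) := by
  rw [dualBond, if_neg (by omega : ((a,b) : Site).2 ≠ ((a,b-1) : Site).2),
    min_eq_right (by omega : b - 1 ≤ b)]

lemma dual_eq {x y x' y' : Site} (hy : y ∈ nbrs x) (hy' : y' ∈ nbrs x')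
    (h : dualBond x y = dualBond x' y') : (x = x' ∧ y = y') ∨ (x = y' ∧ y = x') := by
  obtain ⟨x1, x2⟩ := x; obtain ⟨x1', x2'⟩ := x'
  rw [mem_nbrs] at hy hy'
  rcases hy with rfl | rfl | rfl | rfl <;> rcases hy' with rfl | rfl | rfl | rfl <;>
    simp only [dualBond_r, dualBond_l, dualBond_u, dualBond_d] at h <;>
    rw [Sym2.eq_iff] at h <;>
    simp only [Prod.mk.injEq] at h ⊢ <;> omega

lemma scanR (Q : ℤ → Prop) : ∀ n : ℕ, ∀ a : ℤ, Q a → ¬ Q (a + n) →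
    ∃ t, Q t ∧ ¬ Q (t+1) ∧ a ≤ t ∧ t + 1 ≤ a + n := by
  intro n
  induction n with
  | zero => intro a ha hb; simp at hb; exact absurd ha hb
  | succ n ih =>
    intro a ha hb
    by_cases h : Q (a+1)
    · have hb' : ¬ Q ((a+1) + n) := by
        intro hq; apply hb
        have h2 : a + (((n+1 : ℕ)) : ℤ) = (a + 1) + n := by push_cast; ring
        rw [h2]; exact hq
      obtain ⟨t, h1, h2, h3, h4⟩ := ih (a+1) h hb'
      exact ⟨t, h1, h2, by omega, by omega⟩
    · exact ⟨a, ha, h, le_refl _, by omega⟩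

lemma scanL (Q : ℤ → Prop) (n : ℕ) (a : ℤ) (ha : Q a) (hb : ¬ Q (a - n)) :
    ∃ t, Q t ∧ ¬ Q (t - 1) ∧ a - n ≤ t - 1 ∧ t ≤ a := by
  have ha' : Q (-(-a)) := by simpa using ha
  have hb' : ¬ Q (-(-a + (n : ℤ))) := by
    rw [show -(-a + (n:ℤ)) = a - n by ring]; exact hb
  obtain ⟨t, h1, h2, h3, h4⟩ := scanR (fun t => Q (-t)) n (-a) ha' hb'
  refine ⟨-t, h1, ?_, by omega, by omega⟩
  have h5 : ¬ Q (-(t+1)) := h2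
  rwa [show -(t+1) = -t - 1 by ring] at h5

def keyFn : DBond → ℤ × Bool :=
  Sym2.lift ⟨fun v w => if v.1 = w.1 then (max v.2 w.2, false) else (max v.1 w.1, true),
    by intro v w
       dsimp only
       rcases eq_or_ne v.1 w.1 with h | h
       · rw [if_pos h, if_pos h.symm, max_comm]
       · rw [if_neg h, if_neg (Ne.symm h), max_comm]⟩

lemma key_h (c k : ℤ) : keyFn s((c,k-1),(c,k)) = (k, false) := by
  show (if (c = c) then ((k-1) ⊔ k, false) else ((c ⊔ c), true)) = (k, false)
  rw [if_pos rfl]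
  simp only [Prod.mk.injEq]
  exact ⟨by omega, trivial⟩

lemma key_v (m c : ℤ) : keyFn s((m-1,c),(m,c)) = (m, true) := by
  show (if (m - 1 = m) then (c ⊔ c, false) else (((m-1) ⊔ m), true)) = (m, true)
  rw [if_neg (by omega : ¬ (m - 1 = m))]
  simp only [Prod.mk.injEq]
  exact ⟨by omega, trivial⟩

def Pk : ℤ × Bool → DBond → Prop
  | (k, false), e => ∃ c : ℤ, e = s((c, k - 1), (c, k))
  | (k, true), e => ∃ c : ℤ, e = s((k - 1, c), (k, c))

lemma Pk_inj {p q : ℤ × Bool} {e : DBond} (hp : Pk p e) (hq : Pk q e) : p = q := by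
  obtain ⟨k, b⟩ := p; obtain ⟨k', b'⟩ := q
  cases b <;> cases b' <;>
  · obtain ⟨c, rfl⟩ := hp; obtain ⟨c', h⟩ := hq
    rw [Sym2.eq_iff] at h; simp only [Prod.mk.injEq] at h ⊢
    first
      | exact ⟨by omega, trivial⟩
      | (exfalso; omega)

open Classical in
noncomputable def pick (γu : Finset DBond) (p : ℤ × Bool) : DBond :=
  if h : ∃ e ∈ γu, Pk p e then h.choose else s((0,0),(0,0))

lemma pick_spec {γu : Finset DBond} {p : ℤ × Bool} (h : ∃ e ∈ γu, Pk p e) :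
    pick γu p ∈ γu ∧ Pk p (pick γu p) := by
  rw [pick, dif_pos h]; exact h.choose_spec

lemma mem_interiorBdry_of {l : ℕ} {Θt : Finset Site} {x y : Site} (hx : x ∈ Θt)
    (hy : y ∈ nbrs x) (hyΛ : y ∈ lamBox l) (hyn : y ∉ Θt) :
    dualBond x y ∈ interiorBdry l Θt := by
  rw [interiorBdry, Finset.mem_biUnion]
  exact ⟨x, hx, Finset.mem_image.2 ⟨y, Finset.mem_filter.2 ⟨hy, hyΛ, hyn⟩, rfl⟩⟩

/-- For a non-crossing contour `γ = ∂Q(Θ)` in `Λ(l)` with distinguished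
component `γ̲ = γu`: `|γ \ ∂Q(Λ(l))| ≥ (1/2)|γ| + (1/2)|γ \ (∂Q(Λ(l)) ∪ γ̲)|`. -/
theorem stmt3 (l : ℕ) (Θ : Finset Site) (hΘ : IsContourRegion Θ) (hin : Θ ⊆ lamBox l)
    (hnc : NonCrossing l (contourOf Θ)) (γu : Finset DBond) (Θt : Finset Site)
    (hu : UnderlineData l Θ γu Θt) :
    (contourOf Θ).card + (contourOf Θ \ (boxBdry l ∪ γu)).card ≤
      2 * (contourOf Θ \ boxBdry l).card := by
  classical
  obtain ⟨hsub, -, -, hTTt, hTtL, -, -, hint, i, j, hi, hj, hti, htj, hsi, hsj⟩ := hu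
  have hbar : (contourOf Θ ∩ boxBdry l).card ≤ γu.card := by
    set ci : ℤ := if i = 1 then lamLo l - 1 else lamHi l with hci
    set cj : ℤ := if j = 2 then lamLo l - 1 else lamHi l with hcj
    have struct : ∀ e ∈ contourOf Θ ∩ boxBdry l,
        (∃ k, e = s((ci, k-1),(ci,k)) ∧ ∃ e' ∈ γu, Pk (k, false) e') ∨
        (∃ m, e = s((m-1, cj),(m, cj)) ∧ ∃ e' ∈ γu, Pk (m, true) e') := by
      intro e he
      have heG := (Finset.mem_inter.1 he).1
      have heB := (Finset.mem_inter.1 he).2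
      obtain ⟨x, hxT, y, hynb, hyT, hde⟩ := mem_contourOf.1 heG
      obtain ⟨x', hx'L, y', hy'nb, hy'L, hde'⟩ :=
        mem_contourOf.1 (show e ∈ contourOf (lamBox l) from heB)
      have hdd : dualBond x y = dualBond x' y' := by rw [hde, hde']
      rcases dual_eq hynb hy'nb hdd with ⟨h1, h2⟩ | ⟨h1, h2⟩
      swap
      · exact absurd (h1 ▸ hin hxT) hy'L
      subst h1; subst h2
      subst hde
      have hxL := hin hxT
      obtain ⟨x1, x2⟩ := x
      obtain ⟨hb1, hb2, hb3, hb4⟩ := mem_lamBox'.1 hxL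
      rw [mem_nbrs] at hynb
      rcases hynb with rfl | rfl | rfl | rfl
      · -- y = (x1+1, x2), right side touched
        have hx1 : x1 = lamHi l := by
          by_contra hc
          exact hy'L (mem_lamBox'.2 ⟨by omega, by omega, by omega, by omega⟩)
        subst hx1
        have htouch : touches l 1 (contourOf Θ) := by
          refine ⟨_, heG, (lamHi l, x2), ?_,
            Or.inl ⟨rfl, rfl, show lamLo l - 1 ≤ x2 by omega, show x2 ≤ lamHi l by omega⟩⟩
          rw [dualBond_r, Sym2.mem_iff]; right; rfl
        rcases hi with rfl | rfl
        · exact absurd htouch hti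
        have hcival : ci = lamHi l := by rw [hci, if_neg (by norm_num)]
        have hnot : (lamLo l, x2) ∉ Θt :=
          hsi (lamLo l, x2) ⟨mem_lamBox'.2 ⟨le_refl _, by omega, by omega, by omega⟩,
            Or.inr (Or.inl ⟨rfl, rfl⟩)⟩
        have hmem : (lamHi l, x2) ∈ Θt := hTTt hxT
        have hcast : lamHi l - (((lamHi l - lamLo l).toNat : ℕ) : ℤ) = lamLo l := by omega
        obtain ⟨t, hQt, hQt1, hlow, hhigh⟩ :=
          scanL (fun t => (t, x2) ∈ Θt) (lamHi l - lamLo l).toNat (lamHi l) hmem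
            (show (lamHi l - (((lamHi l - lamLo l).toNat : ℕ) : ℤ), x2) ∉ Θt by
              rw [hcast]; exact hnot)
        left
        refine ⟨x2, by rw [dualBond_r, hcival], dualBond (t, x2) (t-1, x2), ?_, ?_⟩
        · rw [← hint]
          exact mem_interiorBdry_of hQt (by rw [mem_nbrs]; exact Or.inr (Or.inl rfl))
            (mem_lamBox'.2 ⟨by omega, by omega, by omega, by omega⟩) hQt1
        · rw [dualBond_l]; exact ⟨t-1, rfl⟩
      · -- y = (x1-1, x2), left side touched
        have hx1 : x1 = lamLo l := by
          by_contra hc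
          exact hy'L (mem_lamBox'.2 ⟨by omega, by omega, by omega, by omega⟩)
        subst hx1
        have htouch : touches l (-1) (contourOf Θ) := by
          refine ⟨_, heG, (lamLo l - 1, x2), ?_,
            Or.inr (Or.inl ⟨rfl, rfl, show lamLo l - 1 ≤ x2 by omega,
              show x2 ≤ lamHi l by omega⟩)⟩
          rw [dualBond_l, Sym2.mem_iff]; right; rfl
        rcases hi with rfl | rfl
        swap
        · exact absurd htouch hti
        have hcival : ci = lamLo l - 1 := by rw [hci, if_pos rfl]
        have hnot : (lamHi l, x2) ∉ Θt :=
          hsi (lamHi l, x2) ⟨mem_lamBox'.2 ⟨by omega, le_refl _, by omega, by omega⟩,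
            Or.inl ⟨rfl, rfl⟩⟩
        have hmem : (lamLo l, x2) ∈ Θt := hTTt hxT
        have hcast : lamLo l + (((lamHi l - lamLo l).toNat : ℕ) : ℤ) = lamHi l := by omega
        obtain ⟨t, hQt, hQt1, hlow, hhigh⟩ :=
          scanR (fun t => (t, x2) ∈ Θt) (lamHi l - lamLo l).toNat (lamLo l) hmem
            (show (lamLo l + (((lamHi l - lamLo l).toNat : ℕ) : ℤ), x2) ∉ Θt by
              rw [hcast]; exact hnot)
        left
        refine ⟨x2, by rw [dualBond_l, hcival], dualBond (t, x2) (t+1, x2), ?_, ?_⟩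
        · rw [← hint]
          exact mem_interiorBdry_of hQt (by rw [mem_nbrs]; exact Or.inl rfl)
            (mem_lamBox'.2 ⟨by omega, by omega, by omega, by omega⟩) hQt1
        · rw [dualBond_r]; exact ⟨t, rfl⟩
      · -- y = (x1, x2+1), top side touched
        have hx2 : x2 = lamHi l := by
          by_contra hc
          exact hy'L (mem_lamBox'.2 ⟨by omega, by omega, by omega, by omega⟩)
        subst hx2
        have htouch : touches l 2 (contourOf Θ) := by
          refine ⟨_, heG, (x1, lamHi l), ?_,
            Or.inr (Or.inr (Or.inl ⟨rfl, rfl, show lamLo l - 1 ≤ x1 by omega,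
              show x1 ≤ lamHi l by omega⟩))⟩
          rw [dualBond_u, Sym2.mem_iff]; right; rfl
        rcases hj with rfl | rfl
        · exact absurd htouch htj
        have hcjval : cj = lamHi l := by rw [hcj, if_neg (by norm_num)]
        have hnot : (x1, lamLo l) ∉ Θt :=
          hsj (x1, lamLo l) ⟨mem_lamBox'.2 ⟨by omega, by omega, le_refl _, by omega⟩,
            Or.inr (Or.inr (Or.inr ⟨rfl, rfl⟩))⟩
        have hmem : (x1, lamHi l) ∈ Θt := hTTt hxT
        have hcast : lamHi l - (((lamHi l - lamLo l).toNat : ℕ) : ℤ) = lamLo l := by omega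
        obtain ⟨t, hQt, hQt1, hlow, hhigh⟩ :=
          scanL (fun t => (x1, t) ∈ Θt) (lamHi l - lamLo l).toNat (lamHi l) hmem
            (show (x1, lamHi l - (((lamHi l - lamLo l).toNat : ℕ) : ℤ)) ∉ Θt by
              rw [hcast]; exact hnot)
        right
        refine ⟨x1, by rw [dualBond_u, hcjval], dualBond (x1, t) (x1, t-1), ?_, ?_⟩
        · rw [← hint]
          exact mem_interiorBdry_of hQt (by rw [mem_nbrs]; exact Or.inr (Or.inr (Or.inr rfl)))
            (mem_lamBox'.2 ⟨by omega, by omega, by omega, by omega⟩) hQt1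
        · rw [dualBond_d]; exact ⟨t-1, rfl⟩
      · -- y = (x1, x2-1), bottom side touched
        have hx2 : x2 = lamLo l := by
          by_contra hc
          exact hy'L (mem_lamBox'.2 ⟨by omega, by omega, by omega, by omega⟩)
        subst hx2
        have htouch : touches l (-2) (contourOf Θ) := by
          refine ⟨_, heG, (x1, lamLo l - 1), ?_,
            Or.inr (Or.inr (Or.inr ⟨rfl, rfl, show lamLo l - 1 ≤ x1 by omega,
              show x1 ≤ lamHi l by omega⟩))⟩
          rw [dualBond_d, Sym2.mem_iff]; right; rfl
        rcases hj with rfl | rfl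
        swap
        · exact absurd htouch htj
        have hcjval : cj = lamLo l - 1 := by rw [hcj, if_pos rfl]
        have hnot : (x1, lamHi l) ∉ Θt :=
          hsj (x1, lamHi l) ⟨mem_lamBox'.2 ⟨by omega, by omega, by omega, le_refl _⟩,
            Or.inr (Or.inr (Or.inl ⟨rfl, rfl⟩))⟩
        have hmem : (x1, lamLo l) ∈ Θt := hTTt hxT
        have hcast : lamLo l + (((lamHi l - lamLo l).toNat : ℕ) : ℤ) = lamHi l := by omega
        obtain ⟨t, hQt, hQt1, hlow, hhigh⟩ :=
          scanR (fun t => (x1, t) ∈ Θt) (lamHi l - lamLo l).toNat (lamLo l) hmem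
            (show (x1, lamLo l + (((lamHi l - lamLo l).toNat : ℕ) : ℤ)) ∉ Θt by
              rw [hcast]; exact hnot)
        right
        refine ⟨x1, by rw [dualBond_d, hcjval], dualBond (x1, t) (x1, t+1), ?_, ?_⟩
        · rw [← hint]
          exact mem_interiorBdry_of hQt (by rw [mem_nbrs]; exact Or.inr (Or.inr (Or.inl rfl)))
            (mem_lamBox'.2 ⟨by omega, by omega, by omega, by omega⟩) hQt1
        · rw [dualBond_u]; exact ⟨t, rfl⟩
    apply Finset.card_le_card_of_injOn (fun e => pick γu (keyFn e))
    · intro e he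
      rcases struct e he with ⟨k, hsh, hex⟩ | ⟨m, hsh, hex⟩
      · show pick γu (keyFn e) ∈ γu
        rw [hsh, key_h]; exact (pick_spec hex).1
      · show pick γu (keyFn e) ∈ γu
        rw [hsh, key_v]; exact (pick_spec hex).1
    · intro e1 he1 e2 he2 heq
      have heq' : pick γu (keyFn e1) = pick γu (keyFn e2) := heq
      rcases struct e1 he1 with ⟨k1, hs1, hex1⟩ | ⟨m1, hs1, hex1⟩ <;>
        rcases struct e2 he2 with ⟨k2, hs2, hex2⟩ | ⟨m2, hs2, hex2⟩
      · rw [hs1, key_h] at heq'; rw [hs2, key_h] at heq'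
        have hp := Pk_inj (pick_spec hex1).2 (heq' ▸ (pick_spec hex2).2)
        simp only [Prod.mk.injEq] at hp
        rw [hs1, hs2, hp.1]
      · rw [hs1, key_h] at heq'; rw [hs2, key_v] at heq'
        have hp := Pk_inj (pick_spec hex1).2 (heq' ▸ (pick_spec hex2).2)
        simp at hp
      · rw [hs1, key_v] at heq'; rw [hs2, key_h] at heq'
        have hp := Pk_inj (pick_spec hex1).2 (heq' ▸ (pick_spec hex2).2)
        simp at hp
      · rw [hs1, key_v] at heq'; rw [hs2, key_v] at heq'
        have hp := Pk_inj (pick_spec hex1).2 (heq' ▸ (pick_spec hex2).2)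
        simp only [Prod.mk.injEq] at hp
        rw [hs1, hs2, hp.1]
  have e1 : (contourOf Θ \ boxBdry l).card + (contourOf Θ ∩ boxBdry l).card
      = (contourOf Θ).card := Finset.card_sdiff_add_card_inter _ _
  have e2 : contourOf Θ \ (boxBdry l ∪ γu) = (contourOf Θ \ boxBdry l) \ γu :=
    (sdiff_sdiff _ _ _).symm
  have e3 : ((contourOf Θ \ boxBdry l) \ γu).card
      = (contourOf Θ \ boxBdry l).card - γu.card := Finset.card_sdiff_of_subset hsub
  have e4 : γu.card ≤ (contourOf Θ \ boxBdry l).card := Finset.card_le_card hsub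
  rw [e2, e3]
  omega
end

section
/- Let γ be a non-crossing contour in Λ(l) with distinguished component γ̲ and boundary piece γ̄ = ∂Q(Λ(l)) ∩ ∂Q(Θ̃). Then |γ̄| ≤ |γ̲| and |γ̄ \ γ| ≤ |γ \ (∂Q(Λ(l)) ∪ γ̲)|. -/
open Finset

/-! ### Auxiliary machinery for Statement 6 -/

def hbond (c m : ℤ) : DBond := s(((c-1 : ℤ), m), ((c : ℤ), m))
def vbond (m r : ℤ) : DBond := s(((m : ℤ), r-1), ((m : ℤ), r))

lemma hbond_inj {c m c' m' : ℤ} (h : hbond c m = hbond c' m') : c = c' ∧ m = m' := by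
  rw [hbond, hbond, Sym2.eq_iff] at h
  rcases h with ⟨h1, h2⟩ | ⟨h1, h2⟩ <;>
    simp only [Prod.ext_iff] at h1 h2 <;> omega

lemma vbond_inj {c m c' m' : ℤ} (h : vbond c m = vbond c' m') : c = c' ∧ m = m' := by
  rw [vbond, vbond, Sym2.eq_iff] at h
  rcases h with ⟨h1, h2⟩ | ⟨h1, h2⟩ <;>
    simp only [Prod.ext_iff] at h1 h2 <;> omega

lemma hbond_ne_vbond {c m a r : ℤ} : hbond c m ≠ vbond a r := by
  intro h
  rw [hbond, vbond, Sym2.eq_iff] at h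
  rcases h with ⟨h1, h2⟩ | ⟨h1, h2⟩ <;>
    simp only [Prod.ext_iff] at h1 h2 <;> omega

lemma dualBond_right (x : Site) : dualBond x (x.1 + 1, x.2) = vbond x.1 x.2 := by
  simp only [dualBond, vbond]
  rw [if_pos trivial, min_eq_left (by omega)]

lemma dualBond_left (x : Site) : dualBond x (x.1 - 1, x.2) = vbond (x.1 - 1) x.2 := by
  simp only [dualBond, vbond]
  rw [if_pos trivial, min_eq_right (by omega)]

lemma dualBond_up (x : Site) : dualBond x (x.1, x.2 + 1) = hbond x.1 x.2 := by
  simp only [dualBond, hbond]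
  rw [if_neg (by omega), min_eq_left (by omega)]

lemma dualBond_down (x : Site) : dualBond x (x.1, x.2 - 1) = hbond x.1 (x.2 - 1) := by
  simp only [dualBond, hbond]
  rw [if_neg (by omega), min_eq_right (by omega)]

lemma mem_contourOf_hbond {S : Finset Site} {c m : ℤ} :
    hbond c m ∈ contourOf S ↔
      (((c, m) ∈ S ∧ (c, m+1) ∉ S) ∨ ((c, m+1) ∈ S ∧ (c, m) ∉ S)) := by
  constructor
  · intro h
    simp only [contourOf, Finset.mem_biUnion, Finset.mem_image, Finset.mem_filter, nbrs,
      Finset.mem_insert, Finset.mem_singleton, decide_not] at h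
    obtain ⟨x, hx, y, ⟨hy, hyS⟩, heq⟩ := h
    rcases hy with h1 | h1 | h1 | h1 <;> subst h1
    · rw [dualBond_right] at heq; exact absurd heq.symm hbond_ne_vbond
    · rw [dualBond_left] at heq; exact absurd heq.symm hbond_ne_vbond
    · rw [dualBond_up] at heq
      obtain ⟨hc, hm⟩ := hbond_inj heq
      left
      constructor
      · show ((c, m) : Site) ∈ S
        rw [← hc, ← hm]; exact hx
      · show ((c, m + 1) : Site) ∉ S
        rw [← hc, ← hm]; exact hyS
    · rw [dualBond_down] at heq
      obtain ⟨hc, hm⟩ := hbond_inj heq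
      right
      constructor
      · show ((c, m + 1) : Site) ∈ S
        have : x = ((c, m + 1) : Site) := by
          rw [Prod.ext_iff]; constructor <;> omega
        rw [← this]; exact hx
      · show ((c, m) : Site) ∉ S
        have : ((x.1, x.2 - 1) : Site) = ((c, m) : Site) := by
          rw [Prod.ext_iff]; constructor <;> simp <;> omega
        rw [← this]; exact hyS
  · intro h
    simp only [contourOf, Finset.mem_biUnion, Finset.mem_image, Finset.mem_filter, nbrs,
      Finset.mem_insert, Finset.mem_singleton]
    rcases h with ⟨h1, h2⟩ | ⟨h1, h2⟩
    · refine ⟨(c, m), h1, (c, m+1), ⟨?_, ?_⟩, ?_⟩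
      · right; right; left; rfl
      · simpa using h2
      · exact dualBond_up (c, m)
    · refine ⟨(c, m+1), h1, (c, m), ⟨?_, ?_⟩, ?_⟩
      · right; right; right
        rw [Prod.ext_iff]; constructor <;> simp
      · simpa using h2
      · have := dualBond_down ((c, m+1) : Site)
        simp only [show (m+1-1 : ℤ) = m from by omega] at this
        exact this

lemma mem_contourOf_vbond {S : Finset Site} {m r : ℤ} :
    vbond m r ∈ contourOf S ↔
      (((m, r) ∈ S ∧ (m+1, r) ∉ S) ∨ ((m+1, r) ∈ S ∧ (m, r) ∉ S)) := by
  constructor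
  · intro h
    simp only [contourOf, Finset.mem_biUnion, Finset.mem_image, Finset.mem_filter, nbrs,
      Finset.mem_insert, Finset.mem_singleton] at h
    obtain ⟨x, hx, y, ⟨hy, hyS⟩, heq⟩ := h
    rcases hy with h1 | h1 | h1 | h1 <;> subst h1
    · rw [dualBond_right] at heq
      obtain ⟨hc, hm⟩ := vbond_inj heq
      left
      constructor
      · show ((m, r) : Site) ∈ S
        rw [← hc, ← hm]; exact hx
      · show ((m + 1, r) : Site) ∉ S
        rw [← hc, ← hm]; exact hyS
    · rw [dualBond_left] at heq
      obtain ⟨hc, hm⟩ := vbond_inj heq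
      right
      constructor
      · show ((m + 1, r) : Site) ∈ S
        have : x = ((m + 1, r) : Site) := by
          rw [Prod.ext_iff]; constructor <;> omega
        rw [← this]; exact hx
      · show ((m, r) : Site) ∉ S
        have : ((x.1 - 1, x.2) : Site) = ((m, r) : Site) := by
          rw [Prod.ext_iff]; constructor <;> simp <;> omega
        rw [← this]; exact hyS
    · rw [dualBond_up] at heq; exact absurd heq hbond_ne_vbond
    · rw [dualBond_down] at heq; exact absurd heq hbond_ne_vbond
  · intro h
    simp only [contourOf, Finset.mem_biUnion, Finset.mem_image, Finset.mem_filter, nbrs,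
      Finset.mem_insert, Finset.mem_singleton]
    rcases h with ⟨h1, h2⟩ | ⟨h1, h2⟩
    · refine ⟨(m, r), h1, (m+1, r), ⟨?_, ?_⟩, ?_⟩
      · left; rfl
      · simpa using h2
      · exact dualBond_right (m, r)
    · refine ⟨(m+1, r), h1, (m, r), ⟨?_, ?_⟩, ?_⟩
      · right; left
        rw [Prod.ext_iff]; constructor <;> simp
      · simpa using h2
      · have := dualBond_left ((m+1, r) : Site)
        simp only [show (m+1-1 : ℤ) = m from by omega] at this
        exact this

lemma mem_interiorBdry_hbond {l : ℕ} {Θt : Finset Site} {c m : ℤ} :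
    hbond c m ∈ interiorBdry l Θt ↔
      (((c, m) ∈ Θt ∧ (c, m+1) ∈ lamBox l ∧ (c, m+1) ∉ Θt) ∨
       ((c, m+1) ∈ Θt ∧ (c, m) ∈ lamBox l ∧ (c, m) ∉ Θt)) := by
  constructor
  · intro h
    simp only [interiorBdry, Finset.mem_biUnion, Finset.mem_image, Finset.mem_filter, nbrs,
      Finset.mem_insert, Finset.mem_singleton] at h
    obtain ⟨x, hx, y, ⟨hy, hyB, hyS⟩, heq⟩ := h
    rcases hy with h1 | h1 | h1 | h1 <;> subst h1
    · rw [dualBond_right] at heq; exact absurd heq.symm hbond_ne_vbond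
    · rw [dualBond_left] at heq; exact absurd heq.symm hbond_ne_vbond
    · rw [dualBond_up] at heq
      obtain ⟨hc, hm⟩ := hbond_inj heq
      left
      refine ⟨?_, ?_, ?_⟩
      · show ((c, m) : Site) ∈ Θt
        rw [← hc, ← hm]; exact hx
      · show ((c, m + 1) : Site) ∈ lamBox l
        rw [← hc, ← hm]; exact hyB
      · show ((c, m + 1) : Site) ∉ Θt
        rw [← hc, ← hm]; exact hyS
    · rw [dualBond_down] at heq
      obtain ⟨hc, hm⟩ := hbond_inj heq
      right
      have hxe : x = ((c, m + 1) : Site) := by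
        rw [Prod.ext_iff]; constructor <;> omega
      have hye : ((x.1, x.2 - 1) : Site) = ((c, m) : Site) := by
        rw [Prod.ext_iff]; constructor <;> simp <;> omega
      refine ⟨?_, ?_, ?_⟩
      · rw [← hxe]; exact hx
      · rw [← hye]; exact hyB
      · rw [← hye]; exact hyS
  · intro h
    simp only [interiorBdry, Finset.mem_biUnion, Finset.mem_image, Finset.mem_filter, nbrs,
      Finset.mem_insert, Finset.mem_singleton]
    rcases h with ⟨h1, hB, h2⟩ | ⟨h1, hB, h2⟩
    · refine ⟨(c, m), h1, (c, m+1), ⟨?_, hB, h2⟩, ?_⟩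
      · right; right; left; rfl
      · exact dualBond_up (c, m)
    · refine ⟨(c, m+1), h1, (c, m), ⟨?_, hB, h2⟩, ?_⟩
      · right; right; right
        rw [Prod.ext_iff]; constructor <;> simp
      · have := dualBond_down ((c, m+1) : Site)
        simp only [show (m+1-1 : ℤ) = m from by omega] at this
        exact this

lemma mem_interiorBdry_vbond {l : ℕ} {Θt : Finset Site} {m r : ℤ} :
    vbond m r ∈ interiorBdry l Θt ↔
      (((m, r) ∈ Θt ∧ (m+1, r) ∈ lamBox l ∧ (m+1, r) ∉ Θt) ∨
       ((m+1, r) ∈ Θt ∧ (m, r) ∈ lamBox l ∧ (m, r) ∉ Θt)) := by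
  constructor
  · intro h
    simp only [interiorBdry, Finset.mem_biUnion, Finset.mem_image, Finset.mem_filter, nbrs,
      Finset.mem_insert, Finset.mem_singleton] at h
    obtain ⟨x, hx, y, ⟨hy, hyB, hyS⟩, heq⟩ := h
    rcases hy with h1 | h1 | h1 | h1 <;> subst h1
    · rw [dualBond_right] at heq
      obtain ⟨hc, hm⟩ := vbond_inj heq
      left
      refine ⟨?_, ?_, ?_⟩
      · show ((m, r) : Site) ∈ Θt
        rw [← hc, ← hm]; exact hx
      · show ((m + 1, r) : Site) ∈ lamBox l
        rw [← hc, ← hm]; exact hyB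
      · show ((m + 1, r) : Site) ∉ Θt
        rw [← hc, ← hm]; exact hyS
    · rw [dualBond_left] at heq
      obtain ⟨hc, hm⟩ := vbond_inj heq
      right
      have hxe : x = ((m + 1, r) : Site) := by
        rw [Prod.ext_iff]; constructor <;> omega
      have hye : ((x.1 - 1, x.2) : Site) = ((m, r) : Site) := by
        rw [Prod.ext_iff]; constructor <;> simp <;> omega
      refine ⟨?_, ?_, ?_⟩
      · rw [← hxe]; exact hx
      · rw [← hye]; exact hyB
      · rw [← hye]; exact hyS
    · rw [dualBond_up] at heq; exact absurd heq hbond_ne_vbond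
    · rw [dualBond_down] at heq; exact absurd heq hbond_ne_vbond
  · intro h
    simp only [interiorBdry, Finset.mem_biUnion, Finset.mem_image, Finset.mem_filter, nbrs,
      Finset.mem_insert, Finset.mem_singleton]
    rcases h with ⟨h1, hB, h2⟩ | ⟨h1, hB, h2⟩
    · refine ⟨(m, r), h1, (m+1, r), ⟨?_, hB, h2⟩, ?_⟩
      · left; rfl
      · exact dualBond_right (m, r)
    · refine ⟨(m+1, r), h1, (m, r), ⟨?_, hB, h2⟩, ?_⟩
      · right; left
        rw [Prod.ext_iff]; constructor <;> simp
      · have := dualBond_left ((m+1, r) : Site)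
        simp only [show (m+1-1 : ℤ) = m from by omega] at this
        exact this

lemma contourOf_shape {S : Finset Site} {e : DBond} (he : e ∈ contourOf S) :
    (∃ c m, e = hbond c m) ∨ (∃ m r, e = vbond m r) := by
  simp only [contourOf, Finset.mem_biUnion, Finset.mem_image, Finset.mem_filter, nbrs,
    Finset.mem_insert, Finset.mem_singleton] at he
  obtain ⟨x, hx, y, ⟨hy, hyS⟩, heq⟩ := he
  rcases hy with h1 | h1 | h1 | h1 <;> subst h1
  · right; exact ⟨x.1, x.2, by rw [← heq, dualBond_right]⟩
  · right; exact ⟨x.1 - 1, x.2, by rw [← heq, dualBond_left]⟩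
  · left; exact ⟨x.1, x.2, by rw [← heq, dualBond_up]⟩
  · left; exact ⟨x.1, x.2 - 1, by rw [← heq, dualBond_down]⟩

lemma exists_up (P : ℤ → Prop) {a b : ℤ} (hab : a ≤ b) (ha : P a) (hb : ¬ P b) :
    ∃ m, a ≤ m ∧ m < b ∧ (∀ t, a ≤ t → t ≤ m → P t) ∧ ¬ P (m+1) := by
  classical
  have hex : ∃ n : ℕ, ¬ P (a + n) := by
    refine ⟨(b - a).toNat, ?_⟩
    rwa [show a + ((b - a).toNat : ℤ) = b by omega]
  let n := Nat.find hex
  have hn0 : n ≠ 0 := by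
    intro h
    have := Nat.find_spec hex
    rw [show (Nat.find hex) = n from rfl, h] at this
    simp at this
    exact this ha
  refine ⟨a + n - 1, by omega, ?_, ?_, ?_⟩
  · by_contra hcon
    push_neg at hcon
    have hbn : ((b - a).toNat : ℤ) < (n : ℤ) := by omega
    exact Nat.find_min hex (by exact_mod_cast hbn) (by rwa [show a + ((b - a).toNat : ℤ) = b by omega])
  · intro t h1 h2
    have hlt : (t - a).toNat < n := by omega
    have := Nat.find_min hex hlt
    simp only [not_not] at this
    rwa [show a + ((t - a).toNat : ℤ) = t by omega] at this
  · have := Nat.find_spec hex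
    rwa [show a + (n : ℤ) = a + n - 1 + 1 by omega] at this

lemma exists_split (P : ℤ → Prop) {a b : ℤ} (hab : a ≤ b) (h : ¬ (P a ↔ P b)) :
    ∃ m, a ≤ m ∧ m < b ∧ ¬ (P m ↔ P (m+1)) := by
  classical
  by_cases hPa : P a
  · have hPb : ¬ P b := by tauto
    obtain ⟨m, h1, h2, h3, h4⟩ := exists_up P hab hPa hPb
    exact ⟨m, h1, h2, by have := h3 m h1 le_rfl; tauto⟩
  · have hPb : P b := by tauto
    obtain ⟨m, h1, h2, h3, h4⟩ := exists_up (fun t => ¬ P t) hab hPa (by simpa using hPb)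
    exact ⟨m, h1, h2, by have := h3 m h1 le_rfl; simp only [not_not] at h4; tauto⟩

lemma key_up (P Q : ℤ → Prop) {a b : ℤ} (hab : a ≤ b) (hPa : P a) (hPb : ¬ P b)
    (hQP : ∀ t, Q t → P t) (hQa : ¬ Q a)
    (hkey : ∀ m, a ≤ m → m < b → ¬ (P m ↔ P (m+1)) → ¬ (Q m ↔ Q (m+1))) :
    ∃ m, a ≤ m ∧ m < b ∧ ¬ (Q m ↔ Q (m+1)) ∧ P m ∧ P (m+1) := by
  obtain ⟨m, h1, h2, hseg, h4⟩ := exists_up P hab hPa hPb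
  have hPm : P m := hseg m h1 le_rfl
  have hQsplit : ¬ (Q m ↔ Q (m+1)) :=
    hkey m h1 h2 (by tauto)
  have hQm : Q m := by
    have : ¬ Q (m+1) := fun hq => h4 (hQP _ hq)
    tauto
  have hma : a ≤ m := h1
  have : ¬ (Q a ↔ Q m) := by tauto
  obtain ⟨m', h1', h2', h3'⟩ := exists_split Q hma this
  exact ⟨m', h1', lt_trans h2' h2, h3', hseg m' h1' (le_of_lt h2'),
    hseg (m'+1) (by omega) (by omega)⟩

lemma key_down (P Q : ℤ → Prop) {a b : ℤ} (hab : a ≤ b) (hPa : ¬ P a) (hPb : P b)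
    (hQP : ∀ t, Q t → P t) (hQb : ¬ Q b)
    (hkey : ∀ m, a ≤ m → m < b → ¬ (P m ↔ P (m+1)) → ¬ (Q m ↔ Q (m+1))) :
    ∃ m, a ≤ m ∧ m < b ∧ ¬ (Q m ↔ Q (m+1)) ∧ P m ∧ P (m+1) := by
  obtain ⟨m0, h1, h2, h3, h4, h5⟩ :=
    key_up (fun t => P (a + b - t)) (fun t => Q (a + b - t)) hab
      (by simpa using hPb) (by simpa using hPa) (fun t hq => hQP _ hq)
      (by simpa using hQb)
      (by
        intro m hm1 hm2 hsp
        rw [show a + b - (m + 1) = a + b - m - 1 by omega] at hsp ⊢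
        have := hkey (a + b - m - 1) (by omega) (by omega)
          (by rw [show a + b - m - 1 + 1 = a + b - m by omega]; tauto)
        rw [show a + b - m - 1 + 1 = a + b - m by omega] at this
        tauto)
  refine ⟨a + b - m0 - 1, by omega, by omega, ?_, ?_, ?_⟩
  · rw [show a + b - m0 - 1 + 1 = a + b - (m0 + 0) by omega]
    rw [show a + b - (m0 + 0) = a + b - m0 by omega]
    rw [show a + b - m0 - 1 = a + b - (m0 + 1) by omega]
    tauto
  · rw [show a + b - m0 - 1 = a + b - (m0 + 1) by omega]; exact h5
  · rw [show a + b - m0 - 1 + 1 = a + b - m0 by omega]; exact h4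

lemma gammaBar_hbond {l : ℕ} {Θt : Finset Site} (h5 : Θt ⊆ lamBox l) {c m : ℤ}
    (he : hbond c m ∈ gammaBar l Θt) :
    lamLo l ≤ c ∧ c ≤ lamHi l ∧
      ((m = lamLo l - 1 ∧ (c, lamLo l) ∈ Θt) ∨ (m = lamHi l ∧ (c, lamHi l) ∈ Θt)) := by
  obtain ⟨hb, ht⟩ := Finset.mem_inter.mp he
  rw [boxBdry, mem_contourOf_hbond] at hb
  rw [mem_contourOf_hbond] at ht
  rcases hb with ⟨hin, hout⟩ | ⟨hin, hout⟩
  · rw [mem_lamBox] at hin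
    simp only at hin
    have hm : m = lamHi l := by
      by_contra hm
      exact hout (mem_lamBox.mpr (by simp only; omega))
    have hΘ : (c, lamHi l) ∈ Θt := by
      rcases ht with ⟨h1, _⟩ | ⟨h1, _⟩
      · rwa [hm] at h1
      · exact absurd (h5 h1) hout
    exact ⟨by omega, by omega, Or.inr ⟨hm, hΘ⟩⟩
  · rw [mem_lamBox] at hin
    simp only at hin
    have hm : m = lamLo l - 1 := by
      by_contra hm
      exact hout (mem_lamBox.mpr (by simp only; omega))
    have hΘ : (c, lamLo l) ∈ Θt := by
      rcases ht with ⟨h1, _⟩ | ⟨h1, _⟩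
      · exact absurd (h5 h1) hout
      · rwa [show m + 1 = lamLo l by omega] at h1
    exact ⟨by omega, by omega, Or.inl ⟨hm, hΘ⟩⟩

lemma gammaBar_vbond {l : ℕ} {Θt : Finset Site} (h5 : Θt ⊆ lamBox l) {m r : ℤ}
    (he : vbond m r ∈ gammaBar l Θt) :
    lamLo l ≤ r ∧ r ≤ lamHi l ∧
      ((m = lamLo l - 1 ∧ (lamLo l, r) ∈ Θt) ∨ (m = lamHi l ∧ (lamHi l, r) ∈ Θt)) := by
  obtain ⟨hb, ht⟩ := Finset.mem_inter.mp he
  rw [boxBdry, mem_contourOf_vbond] at hb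
  rw [mem_contourOf_vbond] at ht
  rcases hb with ⟨hin, hout⟩ | ⟨hin, hout⟩
  · rw [mem_lamBox] at hin
    simp only at hin
    have hm : m = lamHi l := by
      by_contra hm
      exact hout (mem_lamBox.mpr (by simp only; omega))
    have hΘ : (lamHi l, r) ∈ Θt := by
      rcases ht with ⟨h1, _⟩ | ⟨h1, _⟩
      · rwa [hm] at h1
      · exact absurd (h5 h1) hout
    exact ⟨by omega, by omega, Or.inr ⟨hm, hΘ⟩⟩
  · rw [mem_lamBox] at hin
    simp only at hin
    have hm : m = lamLo l - 1 := by
      by_contra hm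
      exact hout (mem_lamBox.mpr (by simp only; omega))
    have hΘ : (lamLo l, r) ∈ Θt := by
      rcases ht with ⟨h1, _⟩ | ⟨h1, _⟩
      · exact absurd (h5 h1) hout
      · rwa [show m + 1 = lamLo l by omega] at h1
    exact ⟨by omega, by omega, Or.inl ⟨hm, hΘ⟩⟩

/-- Orientation-and-line preserving relation between dual bonds. -/
def brel (e e' : DBond) : Prop :=
  (∃ c m m', e = hbond c m ∧ e' = hbond c m') ∨ (∃ r m m', e = vbond m r ∧ e' = vbond m' r)

lemma card_le_of_brel {A B : Finset DBond}
    (hex : ∀ e ∈ A, ∃ e' ∈ B, brel e e')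
    (huniq : ∀ e1 ∈ A, ∀ e2 ∈ A, ∀ e', brel e1 e' → brel e2 e' → e1 = e2) :
    A.card ≤ B.card := by
  classical
  have hex' : ∀ e ∈ A, ∃ e', e' ∈ B ∧ brel e e' := by
    intro e he; obtain ⟨e', h1, h2⟩ := hex e he; exact ⟨e', h1, h2⟩
  apply Finset.card_le_card_of_injOn
    (fun e => if h : ∃ e', e' ∈ B ∧ brel e e' then h.choose else e)
  · intro e he
    have h := hex' e he
    simp only [dif_pos h]
    exact h.choose_spec.1
  · intro e1 h1 e2 h2 hfe
    rw [Finset.mem_coe] at h1 h2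
    have hh1 := hex' e1 h1
    have hh2 := hex' e2 h2
    simp only [dif_pos hh1, dif_pos hh2] at hfe
    exact huniq e1 h1 e2 h2 _ hh1.choose_spec.2 (hfe ▸ hh2.choose_spec.2)

lemma not_iff_cases {A B : Prop} (h : ¬ (A ↔ B)) : (A ∧ ¬ B) ∨ (B ∧ ¬ A) := by
  rcases Classical.em A with ha | ha
  · exact Or.inl ⟨ha, fun hb => h (iff_of_true ha hb)⟩
  · rcases Classical.em B with hb | hb
    · exact Or.inr ⟨hb, ha⟩
    · exact absurd (iff_of_false ha hb) h

/-- For a non-crossing contour `γ = ∂Q(Θ)` in `Λ(l)` with distinguished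
component `γ̲ = γu` and boundary piece `γ̄ = ∂Q(Λ(l)) ∩ ∂Q(Θ̃)`:
`|γ̄| ≤ |γ̲|` and `|γ̄ \ γ| ≤ |γ \ (∂Q(Λ(l)) ∪ γ̲)|`. -/
theorem stmt6 (l : ℕ) (Θ : Finset Site) (hΘ : IsContourRegion Θ) (hin : Θ ⊆ lamBox l)
    (hnc : NonCrossing l (contourOf Θ)) (γu : Finset DBond) (Θt : Finset Site)
    (hu : UnderlineData l Θ γu Θt) :
    (gammaBar l Θt).card ≤ γu.card ∧
      (gammaBar l Θt \ contourOf Θ).card ≤ (contourOf Θ \ (boxBdry l ∪ γu)).card := by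
  classical
  obtain ⟨h1, -, -, h4, h5, -, -, h8, i, j, hi, hj, -, -, hsi, hsj⟩ := hu
  -- the untouched sides rule out simultaneous contact on opposite sides
  have hHnot : ∀ c, lamLo l ≤ c → c ≤ lamHi l →
      ¬(((c, lamLo l) ∈ Θt) ∧ ((c, lamHi l) ∈ Θt)) := by
    rintro c hc1 hc2 ⟨hbot, htop⟩
    rcases hj with hj | hj <;> subst hj
    · exact hsj (c, lamHi l)
        ⟨mem_lamBox.mpr ⟨hc1, hc2, by omega, le_rfl⟩, Or.inr (Or.inr (Or.inl ⟨rfl, rfl⟩))⟩ htop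
    · exact hsj (c, lamLo l)
        ⟨mem_lamBox.mpr ⟨hc1, hc2, le_rfl, by omega⟩, Or.inr (Or.inr (Or.inr ⟨rfl, rfl⟩))⟩ hbot
  have hVnot : ∀ r, lamLo l ≤ r → r ≤ lamHi l →
      ¬(((lamLo l, r) ∈ Θt) ∧ ((lamHi l, r) ∈ Θt)) := by
    rintro r hr1 hr2 ⟨hleft, hright⟩
    rcases hi with hi | hi <;> subst hi
    · exact hsi (lamHi l, r)
        ⟨mem_lamBox.mpr ⟨by omega, le_rfl, hr1, hr2⟩, Or.inl ⟨rfl, rfl⟩⟩ hright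
    · exact hsi (lamLo l, r)
        ⟨mem_lamBox.mpr ⟨le_rfl, by omega, hr1, hr2⟩, Or.inr (Or.inl ⟨rfl, rfl⟩)⟩ hleft
  -- uniqueness of `gammaBar` bonds on a given line
  have hHuniq : ∀ c m1 m2, hbond c m1 ∈ gammaBar l Θt → hbond c m2 ∈ gammaBar l Θt →
      hbond c m1 = hbond c m2 := by
    intro c m1 m2 he1 he2
    obtain ⟨hc1, hc2, hcase1⟩ := gammaBar_hbond h5 he1
    obtain ⟨-, -, hcase2⟩ := gammaBar_hbond h5 he2
    have hmm : m1 = m2 := by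
      rcases hcase1 with ⟨e1, f1⟩ | ⟨e1, f1⟩ <;> rcases hcase2 with ⟨e2, f2⟩ | ⟨e2, f2⟩
      · omega
      · exact absurd ⟨f1, f2⟩ (hHnot c hc1 hc2)
      · exact absurd ⟨f2, f1⟩ (hHnot c hc1 hc2)
      · omega
    rw [hmm]
  have hVuniq : ∀ r m1 m2, vbond m1 r ∈ gammaBar l Θt → vbond m2 r ∈ gammaBar l Θt →
      vbond m1 r = vbond m2 r := by
    intro r m1 m2 he1 he2
    obtain ⟨hr1, hr2, hcase1⟩ := gammaBar_vbond h5 he1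
    obtain ⟨-, -, hcase2⟩ := gammaBar_vbond h5 he2
    have hmm : m1 = m2 := by
      rcases hcase1 with ⟨e1, f1⟩ | ⟨e1, f1⟩ <;> rcases hcase2 with ⟨e2, f2⟩ | ⟨e2, f2⟩
      · omega
      · exact absurd ⟨f1, f2⟩ (hVnot r hr1 hr2)
      · exact absurd ⟨f2, f1⟩ (hVnot r hr1 hr2)
      · omega
    rw [hmm]
  -- injectivity of the relation on `gammaBar`
  have huniq : ∀ e1 ∈ gammaBar l Θt, ∀ e2 ∈ gammaBar l Θt, ∀ e',
      brel e1 e' → brel e2 e' → e1 = e2 := by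
    intro e1 he1 e2 he2 e' hr1 hr2
    rcases hr1 with ⟨c1, m1, m1', rfl, he'1⟩ | ⟨r1, m1, m1', rfl, he'1⟩ <;>
      rcases hr2 with ⟨c2, m2, m2', rfl, he'2⟩ | ⟨r2, m2, m2', rfl, he'2⟩
    · obtain ⟨hc, -⟩ := hbond_inj (he'1.symm.trans he'2)
      subst hc
      exact hHuniq c1 m1 m2 he1 he2
    · exact absurd (he'1.symm.trans he'2) hbond_ne_vbond
    · exact absurd (he'2.symm.trans he'1) hbond_ne_vbond
    · obtain ⟨-, hr⟩ := vbond_inj (he'1.symm.trans he'2)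
      subst hr
      exact hVuniq r1 m1 m2 he1 he2
  -- the key transfer of splittings from `Θt` to `Θ` via `γu ⊆ ∂Q(Θ)`
  have hkeyH : ∀ c, lamLo l ≤ c → c ≤ lamHi l → ∀ m0, lamLo l ≤ m0 → m0 < lamHi l →
      ¬(((c, m0) ∈ Θt) ↔ ((c, m0 + 1) ∈ Θt)) → ¬(((c, m0) ∈ Θ) ↔ ((c, m0 + 1) ∈ Θ)) := by
    intro c hc1 hc2 m0 hm1 hm2 hsp
    have hbox0 : ((c, m0) : Site) ∈ lamBox l := mem_lamBox.mpr ⟨hc1, hc2, by omega, by omega⟩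
    have hbox1 : ((c, m0 + 1) : Site) ∈ lamBox l := mem_lamBox.mpr ⟨hc1, hc2, by omega, by omega⟩
    have hmem : hbond c m0 ∈ interiorBdry l Θt := by
      rw [mem_interiorBdry_hbond]
      rcases not_iff_cases hsp with ⟨p, q⟩ | ⟨p, q⟩
      · exact Or.inl ⟨p, hbox1, q⟩
      · exact Or.inr ⟨p, hbox0, q⟩
    rw [h8] at hmem
    have hmem2 := h1 hmem
    rw [Finset.mem_sdiff] at hmem2
    have hco := mem_contourOf_hbond.mp hmem2.1
    intro hiff
    rcases hco with ⟨p, q⟩ | ⟨p, q⟩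
    · exact q (hiff.mp p)
    · exact q (hiff.mpr p)
  have hkeyV : ∀ r, lamLo l ≤ r → r ≤ lamHi l → ∀ m0, lamLo l ≤ m0 → m0 < lamHi l →
      ¬(((m0, r) ∈ Θt) ↔ ((m0 + 1, r) ∈ Θt)) → ¬(((m0, r) ∈ Θ) ↔ ((m0 + 1, r) ∈ Θ)) := by
    intro r hr1 hr2 m0 hm1 hm2 hsp
    have hbox0 : ((m0, r) : Site) ∈ lamBox l := mem_lamBox.mpr ⟨by omega, by omega, hr1, hr2⟩
    have hbox1 : ((m0 + 1, r) : Site) ∈ lamBox l := mem_lamBox.mpr ⟨by omega, by omega, hr1, hr2⟩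
    have hmem : vbond m0 r ∈ interiorBdry l Θt := by
      rw [mem_interiorBdry_vbond]
      rcases not_iff_cases hsp with ⟨p, q⟩ | ⟨p, q⟩
      · exact Or.inl ⟨p, hbox1, q⟩
      · exact Or.inr ⟨p, hbox0, q⟩
    rw [h8] at hmem
    have hmem2 := h1 hmem
    rw [Finset.mem_sdiff] at hmem2
    have hco := mem_contourOf_vbond.mp hmem2.1
    intro hiff
    rcases hco with ⟨p, q⟩ | ⟨p, q⟩
    · exact q (hiff.mp p)
    · exact q (hiff.mpr p)
  -- first claim : each bond of `γ̄` yields a bond of `γ̲` on the same line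
  have claim1 : ∀ e ∈ gammaBar l Θt, ∃ e' ∈ γu, brel e e' := by
    intro e he
    have hbox := (Finset.mem_inter.mp he).1
    rw [boxBdry] at hbox
    rcases contourOf_shape hbox with ⟨c, m, rfl⟩ | ⟨m, r, rfl⟩
    · obtain ⟨hc1, hc2, hcase⟩ := gammaBar_hbond h5 he
      have hsplit : ¬(((c, lamLo l) ∈ Θt) ↔ ((c, lamHi l) ∈ Θt)) := by
        have hno := hHnot c hc1 hc2
        rcases hcase with ⟨-, hB⟩ | ⟨-, hB⟩
        · exact fun hiff => hno ⟨hB, hiff.mp hB⟩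
        · exact fun hiff => hno ⟨hiff.mpr hB, hB⟩
      obtain ⟨m0, hm1, hm2, hm3⟩ :=
        exists_split (fun t => ((c, t) : Site) ∈ Θt) (by omega) hsplit
      refine ⟨hbond c m0, ?_, Or.inl ⟨c, m, m0, rfl, rfl⟩⟩
      rw [← h8, mem_interiorBdry_hbond]
      have hbox0 : ((c, m0) : Site) ∈ lamBox l := mem_lamBox.mpr ⟨hc1, hc2, by omega, by omega⟩
      have hbox1 : ((c, m0 + 1) : Site) ∈ lamBox l := mem_lamBox.mpr ⟨hc1, hc2, by omega, by omega⟩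
      rcases not_iff_cases hm3 with ⟨p, q⟩ | ⟨p, q⟩
      · exact Or.inl ⟨p, hbox1, q⟩
      · exact Or.inr ⟨p, hbox0, q⟩
    · obtain ⟨hr1, hr2, hcase⟩ := gammaBar_vbond h5 he
      have hsplit : ¬(((lamLo l, r) ∈ Θt) ↔ ((lamHi l, r) ∈ Θt)) := by
        have hno := hVnot r hr1 hr2
        rcases hcase with ⟨-, hB⟩ | ⟨-, hB⟩
        · exact fun hiff => hno ⟨hB, hiff.mp hB⟩
        · exact fun hiff => hno ⟨hiff.mpr hB, hB⟩
      obtain ⟨m0, hm1, hm2, hm3⟩ :=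
        exists_split (fun t => ((t, r) : Site) ∈ Θt) (by omega) hsplit
      refine ⟨vbond m0 r, ?_, Or.inr ⟨r, m, m0, rfl, rfl⟩⟩
      rw [← h8, mem_interiorBdry_vbond]
      have hbox0 : ((m0, r) : Site) ∈ lamBox l := mem_lamBox.mpr ⟨by omega, by omega, hr1, hr2⟩
      have hbox1 : ((m0 + 1, r) : Site) ∈ lamBox l := mem_lamBox.mpr ⟨by omega, by omega, hr1, hr2⟩
      rcases not_iff_cases hm3 with ⟨p, q⟩ | ⟨p, q⟩
      · exact Or.inl ⟨p, hbox1, q⟩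
      · exact Or.inr ⟨p, hbox0, q⟩
  -- second claim : each bond of `γ̄ \ γ` yields a bond of `γ \ (∂Q(Λ) ∪ γ̲)` on the same line
  have claim2 : ∀ e ∈ gammaBar l Θt \ contourOf Θ,
      ∃ e' ∈ contourOf Θ \ (boxBdry l ∪ γu), brel e e' := by
    intro e he
    rw [Finset.mem_sdiff] at he
    obtain ⟨heg, heno⟩ := he
    have hbox := (Finset.mem_inter.mp heg).1
    rw [boxBdry] at hbox
    rcases contourOf_shape hbox with ⟨c, m, rfl⟩ | ⟨m, r, rfl⟩
    · obtain ⟨hc1, hc2, hcase⟩ := gammaBar_hbond h5 heg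
      have hmain : ∃ m0, lamLo l ≤ m0 ∧ m0 < lamHi l ∧
          ¬(((c, m0) ∈ Θ) ↔ ((c, m0 + 1) ∈ Θ)) ∧ ((c, m0) ∈ Θt) ∧ ((c, m0 + 1) ∈ Θt) := by
        rcases hcase with ⟨hm, hB⟩ | ⟨hm, hB⟩
        · subst hm
          rw [mem_contourOf_hbond] at heno
          simp only [show lamLo l - 1 + 1 = lamLo l from by omega] at heno
          have hnb : ((c, lamLo l - 1) : Site) ∉ Θ := fun hx => by
            have := (mem_lamBox.mp (hin hx)).2.2.1
            simp only at this
            omega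
          have hQa : ((c, lamLo l) : Site) ∉ Θ :=
            fun hb => heno (Or.inr ⟨hb, hnb⟩)
          have hPb : ((c, lamHi l) : Site) ∉ Θt :=
            fun hq => hHnot c hc1 hc2 ⟨hB, hq⟩
          exact key_up (fun t => ((c, t) : Site) ∈ Θt) (fun t => ((c, t) : Site) ∈ Θ)
            (by omega) hB hPb (fun t ht => h4 ht) hQa
            (fun m0 hm1 hm2 hsp => hkeyH c hc1 hc2 m0 hm1 hm2 hsp)
        · subst hm
          rw [mem_contourOf_hbond] at heno
          have hnb : ((c, lamHi l + 1) : Site) ∉ Θ := fun hx => by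
            have := (mem_lamBox.mp (hin hx)).2.2.2
            simp only at this
            omega
          have hQb : ((c, lamHi l) : Site) ∉ Θ :=
            fun hb => heno (Or.inl ⟨hb, hnb⟩)
          have hPa : ((c, lamLo l) : Site) ∉ Θt :=
            fun hq => hHnot c hc1 hc2 ⟨hq, hB⟩
          exact key_down (fun t => ((c, t) : Site) ∈ Θt) (fun t => ((c, t) : Site) ∈ Θ)
            (by omega) hPa hB (fun t ht => h4 ht) hQb
            (fun m0 hm1 hm2 hsp => hkeyH c hc1 hc2 m0 hm1 hm2 hsp)
      obtain ⟨m0, hm1, hm2, hQs, hP0, hP1⟩ := hmain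
      refine ⟨hbond c m0, ?_, Or.inl ⟨c, m, m0, rfl, rfl⟩⟩
      rw [Finset.mem_sdiff, Finset.mem_union]
      refine ⟨mem_contourOf_hbond.mpr (not_iff_cases hQs), ?_⟩
      push_neg
      constructor
      · rw [boxBdry, mem_contourOf_hbond]
        have hbox0 : ((c, m0) : Site) ∈ lamBox l := mem_lamBox.mpr ⟨hc1, hc2, by omega, by omega⟩
        have hbox1 : ((c, m0 + 1) : Site) ∈ lamBox l := mem_lamBox.mpr ⟨hc1, hc2, by omega, by omega⟩
        exact fun h => h.elim (fun p => p.2 hbox1) (fun p => p.2 hbox0)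
      · rw [← h8, mem_interiorBdry_hbond]
        exact fun h => h.elim (fun p => p.2.2 hP1) (fun p => p.2.2 hP0)
    · obtain ⟨hr1, hr2, hcase⟩ := gammaBar_vbond h5 heg
      have hmain : ∃ m0, lamLo l ≤ m0 ∧ m0 < lamHi l ∧
          ¬(((m0, r) ∈ Θ) ↔ ((m0 + 1, r) ∈ Θ)) ∧ ((m0, r) ∈ Θt) ∧ ((m0 + 1, r) ∈ Θt) := by
        rcases hcase with ⟨hm, hB⟩ | ⟨hm, hB⟩
        · subst hm
          rw [mem_contourOf_vbond] at heno
          simp only [show lamLo l - 1 + 1 = lamLo l from by omega] at heno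
          have hnb : ((lamLo l - 1, r) : Site) ∉ Θ := fun hx => by
            have := (mem_lamBox.mp (hin hx)).1
            simp only at this
            omega
          have hQa : ((lamLo l, r) : Site) ∉ Θ :=
            fun hb => heno (Or.inr ⟨hb, hnb⟩)
          have hPb : ((lamHi l, r) : Site) ∉ Θt :=
            fun hq => hVnot r hr1 hr2 ⟨hB, hq⟩
          exact key_up (fun t => ((t, r) : Site) ∈ Θt) (fun t => ((t, r) : Site) ∈ Θ)
            (by omega) hB hPb (fun t ht => h4 ht) hQa
            (fun m0 hm1 hm2 hsp => hkeyV r hr1 hr2 m0 hm1 hm2 hsp)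
        · subst hm
          rw [mem_contourOf_vbond] at heno
          have hnb : ((lamHi l + 1, r) : Site) ∉ Θ := fun hx => by
            have := (mem_lamBox.mp (hin hx)).2.1
            simp only at this
            omega
          have hQb : ((lamHi l, r) : Site) ∉ Θ :=
            fun hb => heno (Or.inl ⟨hb, hnb⟩)
          have hPa : ((lamLo l, r) : Site) ∉ Θt :=
            fun hq => hVnot r hr1 hr2 ⟨hq, hB⟩
          exact key_down (fun t => ((t, r) : Site) ∈ Θt) (fun t => ((t, r) : Site) ∈ Θ)
            (by omega) hPa hB (fun t ht => h4 ht) hQb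
            (fun m0 hm1 hm2 hsp => hkeyV r hr1 hr2 m0 hm1 hm2 hsp)
      obtain ⟨m0, hm1, hm2, hQs, hP0, hP1⟩ := hmain
      refine ⟨vbond m0 r, ?_, Or.inr ⟨r, m, m0, rfl, rfl⟩⟩
      rw [Finset.mem_sdiff, Finset.mem_union]
      refine ⟨mem_contourOf_vbond.mpr (not_iff_cases hQs), ?_⟩
      push_neg
      constructor
      · rw [boxBdry, mem_contourOf_vbond]
        have hbox0 : ((m0, r) : Site) ∈ lamBox l := mem_lamBox.mpr ⟨by omega, by omega, hr1, hr2⟩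
        have hbox1 : ((m0 + 1, r) : Site) ∈ lamBox l := mem_lamBox.mpr ⟨by omega, by omega, hr1, hr2⟩
        exact fun h => h.elim (fun p => p.2 hbox1) (fun p => p.2 hbox0)
      · rw [← h8, mem_interiorBdry_vbond]
        exact fun h => h.elim (fun p => p.2.2 hP1) (fun p => p.2.2 hP0)
  refine ⟨card_le_of_brel claim1 huniq, card_le_of_brel claim2 ?_⟩
  intro e1 he1 e2 he2 e' hr1 hr2
  exact huniq e1 (Finset.mem_sdiff.mp he1).1 e2 (Finset.mem_sdiff.mp he2).1 e' hr1 hr2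
end
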